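/- Fix integers d ≥ 2 and B ≥ 2. There exists a monotone function ψ: [0,1] → ℝ such that for any function f: [0,1]^d → ℝ, there exists a function g: ℝ → ℝ with f(x_1, ..., x_d) = g(∑_{p=1}^d B^{-p} ψ(x_p)) for all (x_1,...,x_d) ∈ [0,1]^d. -/

import Mathlib

open Finset

noncomputable section KolmAux
namespace KolmAux

def dgt (k : ℕ) (x : ℝ) : ℤ := ⌊x * 2 ^ (k+1)⌋ - 2 * ⌊x * 2 ^ k⌋

lemma dgt_rec (k : ℕ) (x : ℝ) : ⌊x * 2 ^ (k+1)⌋ = 2 * ⌊x * 2 ^ k⌋ + dgt k x := by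
  simp [dgt]

lemma dgt_mem (k : ℕ) (x : ℝ) : dgt k x = 0 ∨ dgt k x = 1 := by
  have hf := Int.floor_le (x * 2 ^ k)
  have hf2 := Int.lt_floor_add_one (x * 2 ^ k)
  have hpow : x * 2 ^ (k+1) = (x * 2 ^ k) * 2 := by ring
  have h1 : 2 * ⌊x * 2 ^ k⌋ ≤ ⌊x * 2 ^ (k+1)⌋ := by
    rw [Int.le_floor]
    push_cast
    nlinarith
  have h2 : ⌊x * 2 ^ (k+1)⌋ < 2 * ⌊x * 2 ^ k⌋ + 2 := by
    rw [Int.floor_lt]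
    push_cast
    nlinarith
  unfold dgt; omega

lemma floor_eq_of_dgt_eq {x y : ℝ} (hx : 0 ≤ x) (hx1 : x < 1) (hy : 0 ≤ y) (hy1 : y < 1)
    {n : ℕ} (h : ∀ k < n, dgt k x = dgt k y) : ⌊x * 2 ^ n⌋ = ⌊y * 2 ^ n⌋ := by
  induction n with
  | zero =>
    simp only [pow_zero, mul_one]
    rw [Int.floor_eq_zero_iff.2 ⟨hx, hx1⟩, Int.floor_eq_zero_iff.2 ⟨hy, hy1⟩]
  | succ n ih =>
    rw [dgt_rec n x, dgt_rec n y, ih (fun k hk => h k (by omega)), h n (by omega)]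

lemma eq_of_floor_eq {x y : ℝ} (h : ∀ n : ℕ, ⌊x * 2 ^ n⌋ = ⌊y * 2 ^ n⌋) : x = y := by
  have key : ∀ a b : ℝ, (∀ n : ℕ, ⌊a * 2 ^ n⌋ = ⌊b * 2 ^ n⌋) → a ≤ b := by
    intro a b hab
    by_contra hlt
    push_neg at hlt
    obtain ⟨n, hn⟩ := exists_pow_lt_of_lt_one (sub_pos.2 hlt) (by norm_num : (1:ℝ)/2 < 1)
    have h1 : a * 2 ^ n < ⌊a * 2 ^ n⌋ + 1 := Int.lt_floor_add_one _
    have h2 : (⌊b * 2 ^ n⌋ : ℝ) ≤ b * 2 ^ n := Int.floor_le _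
    rw [hab n] at h1
    have hp : (0:ℝ) < 2 ^ n := by positivity
    rw [div_pow, one_pow, div_lt_iff₀ hp] at hn
    nlinarith
  exact le_antisymm (key x y h) (key y x (fun n => (h n).symm))

lemma eq_of_dgt_eq {x y : ℝ} (hx : 0 ≤ x) (hx1 : x < 1) (hy : 0 ≤ y) (hy1 : y < 1)
    (h : ∀ k, dgt k x = dgt k y) : x = y :=
  eq_of_floor_eq (fun n => floor_eq_of_dgt_eq hx hx1 hy hy1 (fun k _ => h k))

lemma exists_dgt_zero {x : ℝ} (hx : 0 ≤ x) (hx1 : x < 1) : ∃ m, dgt m x = 0 := by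
  by_contra hc
  push_neg at hc
  have hone : ∀ k, dgt k x = 1 := fun k => (dgt_mem k x).resolve_left (hc k)
  have hfl : ∀ n : ℕ, ⌊x * 2 ^ n⌋ = 2 ^ n - 1 := by
    intro n
    induction n with
    | zero => simp [Int.floor_eq_zero_iff.2 ⟨hx, hx1⟩]
    | succ n ih => rw [dgt_rec n x, ih, hone n]; ring
  obtain ⟨n, hn⟩ := exists_pow_lt_of_lt_one (sub_pos.2 hx1) (by norm_num : (1:ℝ)/2 < 1)
  have h2 : ((2:ℤ) ^ n - 1 : ℤ) ≤ x * 2 ^ n := by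
    rw [← hfl n]; exact_mod_cast Int.floor_le _
  have hp : (0:ℝ) < 2 ^ n := by positivity
  rw [div_pow, one_pow, div_lt_iff₀ hp] at hn
  push_cast at h2
  nlinarith

lemma exists_first_diff {x y : ℝ} (hx0 : 0 ≤ x) (hx1 : x < 1) (hy0 : 0 ≤ y) (hy1 : y < 1)
    (hxy : x < y) :
    ∃ m, dgt m x = 0 ∧ dgt m y = 1 ∧ ∀ k < m, dgt k x = dgt k y := by
  have hne : ¬∀ k, dgt k x = dgt k y := by
    intro hall
    exact absurd (eq_of_dgt_eq hx0 hx1 hy0 hy1 hall) (ne_of_lt hxy)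
  push_neg at hne
  classical
  have hex : ∃ m, dgt m x ≠ dgt m y := hne
  let m := Nat.find hex
  have hm : dgt m x ≠ dgt m y := Nat.find_spec hex
  have hmin : ∀ k < m, dgt k x = dgt k y := fun k hk => by
    by_contra hc; exact absurd hk (not_lt.2 (Nat.find_le hc))
  have hfl : ⌊x * 2 ^ m⌋ = ⌊y * 2 ^ m⌋ := floor_eq_of_dgt_eq hx0 hx1 hy0 hy1 hmin
  have hle : dgt m x ≤ dgt m y := by
    have hmono : ⌊x * 2 ^ (m+1)⌋ ≤ ⌊y * 2 ^ (m+1)⌋ := by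
      apply Int.floor_le_floor
      have hp : (0:ℝ) < 2 ^ (m+1) := by positivity
      nlinarith
    unfold dgt
    omega
  have h1 := dgt_mem m x
  have h2 := dgt_mem m y
  exact ⟨m, by omega, by omega, hmin⟩

lemma summable_aux {q : ℝ} (hq0 : 0 ≤ q) (hq1 : q < 1) {c : ℕ → ℝ} (hc : ∀ k, |c k| ≤ 1) :
    Summable (fun k => c k * q ^ (k+1)) := by
  apply Summable.of_norm_bounded
    ((summable_geometric_of_lt_one hq0 hq1).mul_right q)
  intro k
  have hqk : (0:ℝ) ≤ q ^ (k+1) := by positivity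
  have h : ‖c k * q ^ (k+1)‖ = |c k| * q ^ (k+1) := by
    rw [norm_mul, Real.norm_eq_abs, Real.norm_eq_abs, abs_of_nonneg hqk]
  rw [h, pow_succ]
  exact mul_le_of_le_one_left (by positivity) (hc k)

lemma core {q : ℝ} (hq0 : 0 < q) (hq : q ≤ 1/2) {c : ℕ → ℝ} (hc : ∀ k, |c k| ≤ 1)
    {m : ℕ} (h0 : ∀ k < m, c k = 0) {a : ℝ} (ha : a ≤ c m) (hgap : q / (1 - q) < a) :
    0 < ∑' k, c k * q ^ (k+1) := by
  have hq1 : q < 1 := by linarith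
  have hs : Summable (fun k => c k * q ^ (k+1)) := summable_aux hq0.le hq1 hc
  have hsplit := hs.sum_add_tsum_nat_add (m+1)
  have hfin : ∑ i ∈ range (m+1), c i * q ^ (i+1) = c m * q ^ (m+1) := by
    rw [Finset.sum_eq_single_of_mem m (self_mem_range_succ m)]
    intro b hb hbm
    rw [h0 b (by simp at hb; omega), zero_mul]
  have hst : Summable (fun k : ℕ => c (k + (m+1)) * q ^ (k + (m+1) + 1)) :=
    (summable_nat_add_iff (f := fun k => c k * q ^ (k+1)) (m+1)).2 hs
  have hper : ∀ k : ℕ, |c (k + (m+1)) * q ^ (k + (m+1) + 1)| ≤ q ^ (m+2) * q ^ k := by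
    intro k
    rw [abs_mul, abs_of_nonneg (by positivity : (0:ℝ) ≤ q ^ (k + (m+1) + 1)),
      show k + (m+1) + 1 = (m+2) + k from by omega, pow_add]
    exact mul_le_of_le_one_left (by positivity) (hc _)
  have htail : |∑' k : ℕ, c (k + (m+1)) * q ^ (k + (m+1) + 1)| ≤ q ^ (m+2) * (1 - q)⁻¹ := by
    have hfirst : |∑' k : ℕ, c (k + (m+1)) * q ^ (k + (m+1) + 1)|
        ≤ ∑' k : ℕ, |c (k + (m+1)) * q ^ (k + (m+1) + 1)| := by
      have h := norm_tsum_le_tsum_norm (f := fun k : ℕ => c (k + (m+1)) * q ^ (k + (m+1) + 1))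
        (by simp only [Real.norm_eq_abs]; exact hst.abs)
      simp only [Real.norm_eq_abs] at h
      exact h
    calc |∑' k : ℕ, c (k + (m+1)) * q ^ (k + (m+1) + 1)|
        ≤ ∑' k : ℕ, |c (k + (m+1)) * q ^ (k + (m+1) + 1)| := hfirst
      _ ≤ ∑' k : ℕ, q ^ (m+2) * q ^ k :=
          Summable.tsum_le_tsum hper hst.abs ((summable_geometric_of_lt_one hq0.le hq1).mul_left _)
      _ = q ^ (m+2) * (1 - q)⁻¹ := by
          rw [tsum_mul_left, tsum_geometric_of_lt_one hq0.le hq1]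
  have hT := neg_abs_le (∑' k : ℕ, c (k + (m+1)) * q ^ (k + (m+1) + 1))
  have h1q : (0:ℝ) < 1 - q := by linarith
  have hgap2 : q ^ (m+2) * (1 - q)⁻¹ < a * q ^ (m+1) := by
    have heq : q ^ (m+2) * (1 - q)⁻¹ = (q / (1 - q)) * q ^ (m+1) := by
      rw [pow_succ]
      field_simp
    rw [heq]
    exact mul_lt_mul_of_pos_right hgap (pow_pos hq0 _)
  have hcm : a * q ^ (m+1) ≤ c m * q ^ (m+1) :=
    mul_le_mul_of_nonneg_right ha (by positivity)
  rw [← hsplit, hfin]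
  linarith

lemma sum_pow_le {r : ℝ} (hr0 : 0 ≤ r) (hr : r ≤ 1/2) {a b : ℕ} (hab : a ≤ b) :
    ∑ p ∈ Finset.Ico a b, r ^ (p+1) ≤ r ^ a - r ^ b := by
  induction b, hab using Nat.le_induction with
  | base => simp
  | succ b hab ih =>
    rw [Finset.sum_Ico_succ_top hab]
    have h2 : 2 * r ^ (b+1) ≤ r ^ b := by
      rw [pow_succ]
      nlinarith [pow_nonneg hr0 b]
    linarith

lemma finSum_lower {r : ℝ} (hr0 : 0 < r) (hr : r ≤ 1/2) {n : ℕ} {v : ℕ → ℝ}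
    (hv : ∀ p, |v p| ≤ 1) {p₀ : ℕ} (hp₀ : p₀ < n) (hv0 : 1 ≤ |v p₀|)
    (hlow : ∀ p < p₀, v p = 0) :
    r ^ n ≤ |∑ p ∈ Finset.range n, v p * r ^ (p+1)| := by
  have hz : ∀ p ∈ Finset.range p₀, v p * r ^ (p+1) = 0 := by
    intro p hp
    rw [hlow p (Finset.mem_range.1 hp), zero_mul]
  have hsplit : ∑ p ∈ Finset.range n, v p * r ^ (p+1)
      = v p₀ * r ^ (p₀+1) + ∑ p ∈ Finset.Ico (p₀+1) n, v p * r ^ (p+1) := by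
    rw [Finset.range_eq_Ico, ← Finset.sum_Ico_consecutive _ (Nat.zero_le (p₀+1)) hp₀]
    congr 1
    rw [← Finset.range_eq_Ico, Finset.sum_range_succ, Finset.sum_congr rfl hz,
      Finset.sum_const_zero, zero_add]
  have hR : |∑ p ∈ Finset.Ico (p₀+1) n, v p * r ^ (p+1)| ≤ r ^ (p₀+1) - r ^ n := by
    calc |∑ p ∈ Finset.Ico (p₀+1) n, v p * r ^ (p+1)|
        ≤ ∑ p ∈ Finset.Ico (p₀+1) n, |v p * r ^ (p+1)| := Finset.abs_sum_le_sum_abs _ _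
      _ ≤ ∑ p ∈ Finset.Ico (p₀+1) n, r ^ (p+1) := by
          apply Finset.sum_le_sum
          intro p _
          rw [abs_mul, abs_of_nonneg (by positivity : (0:ℝ) ≤ r ^ (p+1))]
          exact mul_le_of_le_one_left (by positivity) (hv p)
      _ ≤ r ^ (p₀+1) - r ^ n := sum_pow_le hr0.le hr hp₀
  have h1 : r ^ (p₀+1) ≤ |v p₀ * r ^ (p₀+1)| := by
    rw [abs_mul, abs_of_nonneg (by positivity : (0:ℝ) ≤ r ^ (p₀+1))]
    nlinarith [pow_pos hr0 (p₀+1)]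
  rw [hsplit]
  have h3 := abs_sub_abs_le_abs_sub (v p₀ * r ^ (p₀+1)) (-(∑ p ∈ Finset.Ico (p₀+1) n, v p * r ^ (p+1)))
  rw [abs_neg, sub_neg_eq_add] at h3
  linarith

def E (x : ℝ) (k : ℕ) : ℝ := if x < 1 then (dgt k x : ℝ) else 1

lemma E_mem (x : ℝ) (k : ℕ) : E x k = 0 ∨ E x k = 1 := by
  unfold E
  split
  · rcases dgt_mem k x with h | h <;> rw [h] <;> simp
  · right; rfl

lemma E_abs (x : ℝ) (k : ℕ) : |E x k| ≤ 1 := by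
  rcases E_mem x k with h | h <;> rw [h] <;> norm_num

lemma E_sub_abs (x y : ℝ) (k : ℕ) : |E x k - E y k| ≤ 1 := by
  rcases E_mem x k with h | h <;> rcases E_mem y k with h' | h' <;> rw [h, h'] <;> norm_num

lemma E_sub_one {x y : ℝ} {k : ℕ} (h : E x k - E y k ≠ 0) : 1 ≤ |E x k - E y k| := by
  rcases E_mem x k with h1 | h1 <;> rcases E_mem y k with h2 | h2 <;>
    rw [h1, h2] <;> rw [h1, h2] at h <;> (revert h; norm_num)

def psi (q x : ℝ) : ℝ := ∑' k, E x k * q ^ (k+1)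

lemma psi_sub {q : ℝ} (hq0 : 0 ≤ q) (hq1 : q < 1) (x y : ℝ) :
    psi q x - psi q y = ∑' k, (E x k - E y k) * q ^ (k+1) := by
  rw [psi, psi, ← Summable.tsum_sub (summable_aux hq0 hq1 (E_abs x)) (summable_aux hq0 hq1 (E_abs y))]
  congr 1
  funext k
  ring

lemma psi_strictMonoOn {q : ℝ} (hq0 : 0 < q) (hq : q ≤ 1/4) :
    StrictMonoOn (psi q) (Set.Icc (0:ℝ) 1) := by
  intro x hx y hy hxy
  have hq1 : q < 1 := by linarith
  rw [← sub_pos, psi_sub hq0.le hq1 y x]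
  rcases lt_or_eq_of_le hy.2 with h1 | h1
  · -- y < 1
    have hx1 : x < 1 := lt_trans hxy h1
    obtain ⟨m, hmx, hmy, hmk⟩ := exists_first_diff hx.1 hx1 hy.1 h1 hxy
    apply core hq0 (by linarith) (fun k => E_sub_abs y x k) (m := m) ?_ (a := 1) ?_ ?_
    · intro k hk
      rw [E, E, if_pos hx1, if_pos h1, hmk k hk, sub_self]
    · rw [E, E, if_pos hx1, if_pos h1, hmx, hmy]
      norm_num
    · rw [div_lt_one (by linarith)]
      linarith
  · -- y = 1
    have hx1 : x < 1 := h1 ▸ hxy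
    obtain ⟨m, hm⟩ := exists_dgt_zero hx.1 hx1
    apply Summable.tsum_pos (summable_aux hq0.le hq1 (E_sub_abs y x))
    · intro k
      have h2 : E y k = 1 := by rw [E, if_neg (by rw [← h1]; exact lt_irrefl y)]
      rcases E_mem x k with h3 | h3 <;> rw [h2, h3] <;> norm_num
      positivity
    · show 0 < (E y m - E x m) * q ^ (m+1)
      have h2 : E y m = 1 := by rw [E, if_neg (by rw [← h1]; exact lt_irrefl y)]
      have h3 : E x m = 0 := by rw [E, if_pos hx1, hm]; norm_num
      rw [h2, h3]
      have : (0:ℝ) < q ^ (m+1) := pow_pos hq0 _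
      linarith

lemma eq_of_E_eq {x y : ℝ} (hx : x ∈ Set.Icc (0:ℝ) 1) (hy : y ∈ Set.Icc (0:ℝ) 1)
    (h : ∀ k, E x k = E y k) : x = y := by
  rcases lt_or_eq_of_le hx.2 with hx1 | hx1 <;> rcases lt_or_eq_of_le hy.2 with hy1 | hy1
  · apply eq_of_dgt_eq hx.1 hx1 hy.1 hy1
    intro k
    have hk := h k
    rw [E, E, if_pos hx1, if_pos hy1] at hk
    exact_mod_cast hk
  · obtain ⟨m, hm⟩ := exists_dgt_zero hx.1 hx1
    have hk := h m
    rw [E, E, if_pos hx1, if_neg (by rw [← hy1]; exact lt_irrefl y), hm] at hk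
    norm_num at hk
  · obtain ⟨m, hm⟩ := exists_dgt_zero hy.1 hy1
    have hk := h m
    rw [E, E, if_pos hy1, if_neg (by rw [← hx1]; exact lt_irrefl x), hm] at hk
    norm_num at hk
  · rw [hx1, hy1]

lemma inj {d B : ℕ} (hd : 2 ≤ d) (hB : 2 ≤ B) {x y : Fin d → ℝ}
    (hx : ∀ p, x p ∈ Set.Icc (0:ℝ) 1) (hy : ∀ p, y p ∈ Set.Icc (0:ℝ) 1)
    (h : ∑ p : Fin d, psi ((B:ℝ)⁻¹ ^ (2*d)) (x p) / (B : ℝ) ^ ((p:ℕ) + 1)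
       = ∑ p : Fin d, psi ((B:ℝ)⁻¹ ^ (2*d)) (y p) / (B : ℝ) ^ ((p:ℕ) + 1)) :
    x = y := by
  classical
  set r : ℝ := (B:ℝ)⁻¹ with hr_def
  have hB1 : (2:ℝ) ≤ (B:ℝ) := by exact_mod_cast hB
  have hBpos : (0:ℝ) < B := by linarith
  have hr0 : 0 < r := inv_pos.2 hBpos
  have hr : r ≤ 1/2 := by
    rw [hr_def, show (1:ℝ)/2 = 2⁻¹ by norm_num]
    exact inv_anti₀ (by norm_num) hB1
  set q : ℝ := r ^ (2*d) with hq_def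
  have hq0 : 0 < q := pow_pos hr0 _
  have hrd : r ^ d ≤ 1/4 := by
    calc r ^ d ≤ (1/2) ^ d := pow_le_pow_left₀ hr0.le hr d
      _ ≤ (1/2) ^ 2 := pow_le_pow_of_le_one (by norm_num) (by norm_num) hd
      _ = 1/4 := by norm_num
  have hrdpos : 0 < r ^ d := pow_pos hr0 d
  have hq_eq : q = r ^ d * r ^ d := by rw [hq_def, two_mul, pow_add]
  have hq : q ≤ 1/2 := by nlinarith
  have hq1 : q < 1 := by linarith
  have hgap : q / (1 - q) < r ^ d := by
    rw [div_lt_iff₀ (by linarith : (0:ℝ) < 1 - q)]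
    nlinarith
  set X : ℕ → ℝ := fun p => if hp : p < d then x ⟨p, hp⟩ else 0 with hX
  set Y : ℕ → ℝ := fun p => if hp : p < d then y ⟨p, hp⟩ else 0 with hY
  set δ : ℕ → ℕ → ℝ := fun p k => E (X p) k - E (Y p) k with hδ
  have hδ1 : ∀ p k, |δ p k| ≤ 1 := fun p k => E_sub_abs _ _ _
  have hδd : ∀ p k, d ≤ p → δ p k = 0 := by
    intro p k hp
    have hXp : X p = 0 := by rw [hX]; exact dif_neg (not_lt.2 hp)
    have hYp : Y p = 0 := by rw [hY]; exact dif_neg (not_lt.2 hp)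
    rw [hδ]
    simp only [hXp, hYp, sub_self]
  set u : ℕ → ℝ := fun k => ∑ p ∈ Finset.range d, δ p k * r ^ (p+1) with hu
  have hu1 : ∀ k, |u k| ≤ 1 := by
    intro k
    rw [hu]
    calc |∑ p ∈ Finset.range d, δ p k * r ^ (p+1)|
        ≤ ∑ p ∈ Finset.range d, |δ p k * r ^ (p+1)| := Finset.abs_sum_le_sum_abs _ _
      _ ≤ ∑ p ∈ Finset.range d, r ^ (p+1) := by
          apply Finset.sum_le_sum
          intro p _
          rw [abs_mul, abs_of_nonneg (by positivity : (0:ℝ) ≤ r ^ (p+1))]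
          exact mul_le_of_le_one_left (by positivity) (hδ1 p k)
      _ ≤ r ^ 0 - r ^ d := by
          rw [Finset.range_eq_Ico]
          exact sum_pow_le hr0.le hr (Nat.zero_le d)
      _ ≤ 1 := by rw [pow_zero]; linarith
  have hdiv : ∀ z : Fin d → ℝ, ∑ p : Fin d, psi q (z p) / (B:ℝ) ^ ((p:ℕ)+1)
      = ∑ p : Fin d, psi q (z p) * r ^ ((p:ℕ)+1) := by
    intro z
    apply Finset.sum_congr rfl
    intro p _
    rw [div_eq_mul_inv, ← inv_pow]
  rw [hdiv x, hdiv y] at h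
  have hXx : ∀ p : Fin d, X (p:ℕ) = x p := by
    intro p
    rw [hX]
    simp only [Fin.is_lt, dif_pos, Fin.eta]
  have hYy : ∀ p : Fin d, Y (p:ℕ) = y p := by
    intro p
    rw [hY]
    simp only [Fin.is_lt, dif_pos, Fin.eta]
  have hx' : ∑ p : Fin d, psi q (x p) * r ^ ((p:ℕ)+1)
      = ∑ p ∈ Finset.range d, psi q (X p) * r ^ (p+1) := by
    rw [← Fin.sum_univ_eq_sum_range (fun p => psi q (X p) * r ^ (p+1)) d]
    exact Finset.sum_congr rfl (fun p _ => by rw [hXx p])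
  have hy' : ∑ p : Fin d, psi q (y p) * r ^ ((p:ℕ)+1)
      = ∑ p ∈ Finset.range d, psi q (Y p) * r ^ (p+1) := by
    rw [← Fin.sum_univ_eq_sum_range (fun p => psi q (Y p) * r ^ (p+1)) d]
    exact Finset.sum_congr rfl (fun p _ => by rw [hYy p])
  have hsum0 : ∑ p ∈ Finset.range d, (psi q (X p) - psi q (Y p)) * r ^ (p+1) = 0 := by
    have h2 : ∑ p ∈ Finset.range d,
        (psi q (X p) * r ^ (p+1) - psi q (Y p) * r ^ (p+1)) = 0 := by
      rw [Finset.sum_sub_distrib, ← hx', ← hy', h, sub_self]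
    rw [← h2]
    exact Finset.sum_congr rfl (fun p _ => by ring)
  have hterm : ∀ p ∈ Finset.range d, (psi q (X p) - psi q (Y p)) * r ^ (p+1)
      = ∑' k, δ p k * q ^ (k+1) * r ^ (p+1) := by
    intro p _
    rw [psi_sub hq0.le hq1, ← tsum_mul_right]
  have h0 : ∑' k, u k * q ^ (k+1) = 0 := by
    have hswap : ∑ p ∈ Finset.range d, ∑' k, δ p k * q ^ (k+1) * r ^ (p+1)
        = ∑' k, u k * q ^ (k+1) := by
      rw [← Summable.tsum_finsetSum (fun p _ => ((summable_aux hq0.le hq1 (hδ1 p)).mul_right (r ^ (p+1))))]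
      congr 1
      funext k
      rw [hu, Finset.sum_mul]
      exact Finset.sum_congr rfl (fun p _ => by ring)
    rw [← hswap, ← Finset.sum_congr rfl hterm]
    exact hsum0
  have hδ0 : ∀ p k, δ p k = 0 := by
    by_contra hc
    push_neg at hc
    obtain ⟨p1, k1, hpk⟩ := hc
    have hexk : ∃ k, ∃ p, δ p k ≠ 0 := ⟨k1, p1, hpk⟩
    obtain ⟨p2, hp2⟩ := Nat.find_spec hexk
    set m := Nat.find hexk with hm_def
    have hmin : ∀ k < m, ∀ p, δ p k = 0 := by
      intro k hk p
      by_contra hne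
      exact absurd hk (not_lt.2 (Nat.find_le ⟨p, hne⟩))
    have hexp : ∃ p, δ p m ≠ 0 := ⟨p2, hp2⟩
    have hp₀ : δ (Nat.find hexp) m ≠ 0 := Nat.find_spec hexp
    set p₀ := Nat.find hexp with hp0_def
    have hp₀min : ∀ p < p₀, δ p m = 0 := by
      intro p hp
      by_contra hne
      exact absurd hp (not_lt.2 (Nat.find_le hne))
    have hp₀d : p₀ < d := by
      by_contra hge
      exact hp₀ (hδd p₀ m (not_lt.1 hge))
    have habs1 : 1 ≤ |δ p₀ m| := E_sub_one hp₀
    have hlow : r ^ d ≤ |u m| :=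
      finSum_lower hr0 hr (fun p => hδ1 p m) hp₀d habs1 hp₀min
    have humzero : ∀ k < m, u k = 0 := by
      intro k hk
      rw [hu]
      exact Finset.sum_eq_zero (fun p _ => by rw [hmin k hk p, zero_mul])
    have hum : u m ≠ 0 := by
      intro h'
      rw [h', abs_zero] at hlow
      linarith
    rcases lt_or_gt_of_ne hum with hneg | hpos
    · have hcore := core hq0 hq (c := fun k => -u k)
        (fun k => by rw [abs_neg]; exact hu1 k)
        (m := m) (fun k hk => by show -u k = 0; rw [humzero k hk, neg_zero])
        (a := r ^ d) (by rw [abs_of_neg hneg] at hlow; exact hlow) hgap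
      have hz : ∑' k, (-u k) * q ^ (k+1) = 0 := by
        have : ∀ k, (-u k) * q ^ (k+1) = -(u k * q ^ (k+1)) := fun k => by ring
        rw [tsum_congr this, tsum_neg, h0, neg_zero]
      rw [hz] at hcore
      exact lt_irrefl 0 hcore
    · have hcore := core hq0 hq hu1 humzero
        (a := r ^ d) (by rw [abs_of_pos hpos] at hlow; exact hlow) hgap
      rw [h0] at hcore
      exact lt_irrefl 0 hcore
  funext p
  apply eq_of_E_eq (hx p) (hy p)
  intro k
  have hz := hδ0 (p:ℕ) k
  rw [hδ] at hz
  simp only [hXx p, hYy p] at hz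
  linarith [hz]

end KolmAux

/-- Fix integers `d ≥ 2` and `B ≥ 2`. There exists a monotone function
`ψ : [0,1] → ℝ` such that for any function `f : [0,1]^d → ℝ` there exists `g : ℝ → ℝ` with
`f(x_1,…,x_d) = g(∑_{p=1}^d B^{-p} ψ(x_p))` on `[0,1]^d`. -/
theorem stmt0 (d B : ℕ) (hd : 2 ≤ d) (hB : 2 ≤ B) :
    ∃ ψ : ℝ → ℝ, MonotoneOn ψ (Set.Icc 0 1) ∧
      ∀ f : (Fin d → ℝ) → ℝ, ∃ g : ℝ → ℝ,
        ∀ x : Fin d → ℝ, (∀ p, x p ∈ Set.Icc (0:ℝ) 1) →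
          f x = g (∑ p : Fin d, ψ (x p) / (B : ℝ) ^ ((p : ℕ) + 1)) := by
  classical
  have hB1 : (2:ℝ) ≤ (B:ℝ) := by exact_mod_cast hB
  have hBpos : (0:ℝ) < B := by linarith
  have hr0 : 0 < (B:ℝ)⁻¹ := inv_pos.2 hBpos
  have hr : (B:ℝ)⁻¹ ≤ 1/2 := by
    rw [show (1:ℝ)/2 = 2⁻¹ by norm_num]
    exact inv_anti₀ (by norm_num) hB1
  have hq0 : 0 < (B:ℝ)⁻¹ ^ (2*d) := pow_pos hr0 _
  have hq4 : (B:ℝ)⁻¹ ^ (2*d) ≤ 1/4 := by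
    calc (B:ℝ)⁻¹ ^ (2*d) ≤ (1/2) ^ (2*d) := pow_le_pow_left₀ hr0.le hr _
      _ ≤ (1/2) ^ 2 := pow_le_pow_of_le_one (by norm_num) (by norm_num) (by omega)
      _ = 1/4 := by norm_num
  refine ⟨KolmAux.psi ((B:ℝ)⁻¹ ^ (2*d)), (KolmAux.psi_strictMonoOn hq0 hq4).monotoneOn, ?_⟩
  intro f
  refine ⟨fun t => if h : ∃ z : Fin d → ℝ, (∀ p, z p ∈ Set.Icc (0:ℝ) 1) ∧
      (∑ p : Fin d, KolmAux.psi ((B:ℝ)⁻¹ ^ (2*d)) (z p) / (B:ℝ) ^ ((p:ℕ)+1)) = t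
      then f h.choose else 0, ?_⟩
  intro x hx
  have hex : ∃ z : Fin d → ℝ, (∀ p, z p ∈ Set.Icc (0:ℝ) 1) ∧
      (∑ p : Fin d, KolmAux.psi ((B:ℝ)⁻¹ ^ (2*d)) (z p) / (B:ℝ) ^ ((p:ℕ)+1))
      = ∑ p : Fin d, KolmAux.psi ((B:ℝ)⁻¹ ^ (2*d)) (x p) / (B:ℝ) ^ ((p:ℕ)+1) := ⟨x, hx, rfl⟩
  simp only [dif_pos hex]
  obtain ⟨hz1, hz2⟩ := hex.choose_spec
  rw [KolmAux.inj hd hB hz1 hx hz2]
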